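/- arXiv:0710.5362 — 8 statements merged into one kernel-verified Lean document; each statement's English description precedes it below -/
import Mathlib

section
/- In the Hecke algebra of type A, the Baxterised elements g_i(u) = ([1-u] + [u]·a_i)/[1+u] satisfy the Yang-Baxter equation g_i(u)·g_{i+1}(u+v)·g_i(v) = g_{i+1}(v)·g_i(u+v)·g_{i+1}(u), for all spectral parameters u, v for which the expressions are defined. -/
noncomputable section

/-- The q-number `[x] = (q^x - q^{-x})/(q - q⁻¹)` for a complex exponent `x`. -/
noncomputable def qnum (q x : ℂ) : ℂ := (q ^ x - q ^ (-x)) / (q - q⁻¹)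

private lemma frac_key (q X Y w A B C D E F : ℂ)
    (hq : q ≠ 0) (hX : X ≠ 0) (hY : Y ≠ 0) (hw : w ≠ 0)
    (H : A * (q * (B * C + D * E) + D * C * (q^2+1)) = q * F * (E * B - C * D)) :
    A/(X*Y*w) * (B/(Y*w) * (C/(X*w)) + D/(Y*w) * (E/(X*w)) + D/(Y*w) * (C/(X*w)) * ((q^2+1)/q))
      = F/(X*Y*w) * (E/(X*w) * (B/(Y*w)) - C/(X*w) * (D/(Y*w))) := by
  have hYw : Y * w ≠ 0 := mul_ne_zero hY hw
  have hXw : X * w ≠ 0 := mul_ne_zero hX hw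
  have hP : Y * w * (X * w) ≠ 0 := mul_ne_zero hYw hXw
  have hPq : Y * w * (X * w) * q ≠ 0 := mul_ne_zero hP hq
  have hXYw : X * Y * w ≠ 0 := mul_ne_zero (mul_ne_zero hX hY) hw
  have hP2 : X * w * (Y * w) ≠ 0 := mul_ne_zero hXw hYw
  rw [div_mul_div_comm B, div_mul_div_comm D _ E, div_mul_div_comm D _ C,
    div_mul_div_comm (D*C), ← add_div,
    div_add_div _ _ hP hPq, div_mul_div_comm A,
    div_mul_div_comm E, div_mul_div_comm C, div_sub_div _ _ hP2 hP2, div_mul_div_comm F,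
    div_eq_div_iff (mul_ne_zero hXYw (mul_ne_zero hP hPq)) (mul_ne_zero hXYw (mul_ne_zero hP2 hP2))]
  linear_combination (X*w*(Y*w))^2 * (X*Y*w) * (Y*w*(X*w)) * H

set_option maxHeartbeats 1000000 in
private lemma qnum_key (q u v : ℂ) (hq : q ≠ 0) (hqq : q - q⁻¹ ≠ 0) :
    qnum q (1-(u+v)) * (qnum q (1-v) * qnum q u + qnum q v * qnum q (1-u)
        + qnum q v * qnum q u * qnum q 2)
      = qnum q (u+v) * (qnum q (1-u) * qnum q (1-v) - qnum q u * qnum q v) := by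
  have hX : q ^ u ≠ 0 := fun h => hq ((Complex.cpow_eq_zero_iff q u).mp h).1
  have hY : q ^ v ≠ 0 := fun h => hq ((Complex.cpow_eq_zero_iff q v).mp h).1
  have hd : q - q⁻¹ = (q^2 - 1)/q := by field_simp
  have h21 : q^2 - 1 ≠ 0 := by
    intro h; apply hqq; rw [hd, h, zero_div]
  have huv : q ^ (u + v) = q ^ u * q ^ v := Complex.cpow_add _ _ hq
  have gen : ∀ x : ℂ, q ^ x ≠ 0 → qnum q x = q * ((q^x)^2 - 1)/((q^x)*(q^2-1)) := by
    intro x hx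
    simp only [qnum, Complex.cpow_neg, hd]
    field_simp
  have gen1 : ∀ x : ℂ, q ^ x ≠ 0 → qnum q (1 - x) = (q^2 - (q^x)^2)/((q^x)*(q^2-1)) := by
    intro x hx
    simp only [qnum, neg_sub, Complex.cpow_sub _ _ hq, Complex.cpow_one, hd]
    field_simp
  have g2 : qnum q 2 = (q^2 + 1)/q := by
    simp only [qnum, (by norm_num : (2:ℂ) = 1+1), neg_add, Complex.cpow_add _ _ hq,
      Complex.cpow_one, Complex.cpow_neg_one, hd]
    field_simp
    ring
  rw [gen u hX, gen v hY, gen (u+v) (by rw [huv]; exact mul_ne_zero hX hY),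
    gen1 u hX, gen1 v hY, gen1 (u+v) (by rw [huv]; exact mul_ne_zero hX hY), g2, huv]
  generalize q^2 - 1 = w at h21 ⊢
  exact frac_key q (q^u) (q^v) w _ _ _ _ _ _ hq hX hY h21 (by ring)

private lemma yb_core (A : Type*) [Ring A] [Algebra ℂ A] (e1 e2 : A)
    (t c1 d1 c2 d2 c3 d3 c1' d1' c3' d3' : ℂ)
    (h11 : e1 * e1 = t • e1) (h22 : e2 * e2 = t • e2)
    (hbr : e2 * e1 * e2 = e1 * e2 * e1 - e1 + e2)
    (H1 : c3 * (c2 * c1) = c3' * (c2 * c1'))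
    (H2 : c3 * (c2 * d1) + (d3 * (c2 * c1) + d3 * (c2 * (d1 * t)))
        = c3' * (d2 * c1') + -(d3' * (d2 * d1')))
    (H3 : c3 * (d2 * c1)
        = c3' * (c2 * d1') + (d3' * (c2 * c1') + d3' * (c2 * (d1' * t)) + d3' * (d2 * d1')))
    (H4 : c3 * (d2 * d1) = d3' * (d2 * c1'))
    (H5 : d3 * (d2 * c1) = c3' * (d2 * d1'))
    (H6 : d3 * (d2 * d1) = d3' * (d2 * d1')) :
    (c1 • (1:A) + d1 • e1) * (c2 • (1:A) + d2 • e2) * (c3 • (1:A) + d3 • e1)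
      = (c1' • (1:A) + d1' • e2) * (c2 • (1:A) + d2 • e1) * (c3' • (1:A) + d3' • e2) := by
  simp only [mul_add, add_mul, smul_mul_assoc, mul_smul_comm, smul_smul, mul_one, one_mul]
  rw [h11, h22, hbr]
  simp only [smul_smul, smul_sub, smul_add]
  match_scalars
  · linear_combination H1
  · linear_combination H2
  · linear_combination H3
  · linear_combination H4
  · linear_combination H5
  · linear_combination H6

set_option maxHeartbeats 2000000 in
/-- The Yang-Baxter equation for the Baxterised elements
`g_i(u) = ([1-u] + [u] a_i)/[1+u]` of the type-A Hecke algebra. -/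
theorem baxterised_yang_baxter (N : ℕ) (A : Type*) [Ring A] [Algebra ℂ A]
    (q : ℂ) (hq : q ≠ 0) (hqq : q - q⁻¹ ≠ 0) (a : ℕ → A)
    (hsq : ∀ i, 1 ≤ i → i ≤ N - 1 → a i * a i = qnum q 2 • a i)
    (hcomm : ∀ i j, 1 ≤ i → i ≤ N - 1 → 1 ≤ j → j ≤ N - 1 → (i + 1 < j ∨ j + 1 < i) →
      a i * a j = a j * a i)
    (hbraid : ∀ i, 1 ≤ i → i + 1 ≤ N - 1 →
      a i * a (i + 1) * a i - a i = a (i + 1) * a i * a (i + 1) - a (i + 1))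
    (i : ℕ) (h1 : 1 ≤ i) (h2 : i + 1 ≤ N - 1)
    (u v : ℂ) (hu : qnum q (1 + u) ≠ 0) (hv : qnum q (1 + v) ≠ 0)
    (huv : qnum q (1 + (u + v)) ≠ 0) :
    letI gB : ℕ → ℂ → A := fun j w =>
      (qnum q (1 + w))⁻¹ • (qnum q (1 - w) • (1 : A) + qnum q w • a j)
    gB i u * gB (i + 1) (u + v) * gB i v
      = gB (i + 1) v * gB i (u + v) * gB (i + 1) u := by
  show ((qnum q (1 + u))⁻¹ • (qnum q (1 - u) • (1 : A) + qnum q u • a i)) *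
      ((qnum q (1 + (u+v)))⁻¹ • (qnum q (1 - (u+v)) • (1 : A) + qnum q (u+v) • a (i+1))) *
      ((qnum q (1 + v))⁻¹ • (qnum q (1 - v) • (1 : A) + qnum q v • a i)) =
      ((qnum q (1 + v))⁻¹ • (qnum q (1 - v) • (1 : A) + qnum q v • a (i+1))) *
      ((qnum q (1 + (u+v)))⁻¹ • (qnum q (1 - (u+v)) • (1 : A) + qnum q (u+v) • a i)) *
      ((qnum q (1 + u))⁻¹ • (qnum q (1 - u) • (1 : A) + qnum q u • a (i+1)))
  have h11 : a i * a i = qnum q 2 • a i := hsq i h1 (by omega)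
  have h22 : a (i+1) * a (i+1) = qnum q 2 • a (i+1) := hsq (i+1) (by omega) h2
  have hbr : a (i+1) * a i * a (i+1) = a i * a (i+1) * a i - a i + a (i+1) := by
    rw [hbraid i h1 h2]; abel
  have key := qnum_key q u v hq hqq
  have key' := qnum_key q v u hq hqq
  rw [add_comm v u] at key'
  simp only [smul_add, smul_smul]
  apply yb_core _ _ _ (qnum q 2) _ _ _ _ _ _ _ _ _ _ h11 h22 hbr
  · ring
  · linear_combination ((qnum q (1+u))⁻¹ * (qnum q (1+(u+v)))⁻¹ * (qnum q (1+v))⁻¹) * key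
  · linear_combination (-((qnum q (1+u))⁻¹ * (qnum q (1+(u+v)))⁻¹ * (qnum q (1+v))⁻¹)) * key'
  · ring
  · ring
  · ring
end
end

section
/- The renormalised Baxterised elements h_i(u) := [u+1]/[u] - a_i satisfy the Yang-Baxter equation h_i(u)·h_{i+1}(u+v)·h_i(v) = h_{i+1}(v)·h_i(u+v)·h_{i+1}(u) whenever [u], [v], [u+v] are nonzero. -/
noncomputable section

set_option maxHeartbeats 1600000

private lemma yb_aux {A : Type*} [Ring A] [Algebra ℂ A] (b c : A) (α β γ δ : ℂ)
    (hb : b * b = δ • b) (hc : c * c = δ • c)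
    (hbr : b * c * b - b = c * b * c - c)
    (key : γ * (δ - α - β) + α * β = 1) :
    (α • 1 - b) * (γ • 1 - c) * (β • 1 - b) = (β • 1 - c) * (γ • 1 - b) * (α • 1 - c) := by
  have hbcb : b * c * b = c * b * c - c + b := by rw [← hbr]; abel
  rw [← sub_eq_zero]
  have e : (α • 1 - b) * (γ • 1 - c) * (β • 1 - b) - (β • 1 - c) * (γ • 1 - b) * (α • 1 - c)
      = (γ * (δ - α - β) + α * β - 1) • (b - c) := by
    simp only [mul_sub, sub_mul, smul_mul_assoc, mul_smul_comm, one_mul, mul_one, smul_smul,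
      ← mul_assoc, smul_sub, sub_smul, add_smul, mul_smul_comm]
    rw [hb, hc, hbcb]
    match_scalars <;> ring
  rw [e, show γ * (δ - α - β) + α * β - 1 = 0 by rw [key]; ring, zero_smul]

private lemma abstract_key (A B C a b c δ : ℂ) (ha : a ≠ 0) (hb : b ≠ 0) (hc : c ≠ 0)
    (hcl : C * (δ * a * b - A * b - a * B) + A * B * c = a * b * c) :
    (C / c) * (δ - A / a - B / b) + (A / a) * (B / b) = 1 := by
  have h1 : δ - A / a - B / b = (δ * a * b - A * b - a * B) / (a * b) := by
    field_simp
  rw [h1, div_mul_div_comm, div_mul_div_comm]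
  rw [show c * (a * b) = a * b * c by ring]
  have h2 : A * B / (a * b) = A * B * c / (a * b * c) := by
    rw [mul_div_mul_right _ _ hc]
  rw [h2, ← add_div, hcl, div_self (mul_ne_zero (mul_ne_zero ha hb) hc)]

private lemma cleared (q : ℂ) (hq : q ≠ 0) (hqq : q - q⁻¹ ≠ 0) (u v : ℂ) :
    qnum q (u + v + 1) * (qnum q 2 * qnum q u * qnum q v
        - qnum q (u + 1) * qnum q v - qnum q u * qnum q (v + 1))
      + qnum q (u + 1) * qnum q (v + 1) * qnum q (u + v)
    = qnum q u * qnum q v * qnum q (u + v) := by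
  have hX : q ^ u ≠ 0 := by
    simp [Complex.cpow_def_of_ne_zero hq, Complex.exp_ne_zero]
  have hY : q ^ v ≠ 0 := by
    simp [Complex.cpow_def_of_ne_zero hq, Complex.exp_ne_zero]
  have e2 : qnum q 2 = q + q⁻¹ := by
    rw [qnum, show (q:ℂ) ^ (2:ℂ) = q * q by
        rw [show (2 : ℂ) = ((2 : ℕ) : ℂ) by norm_num, Complex.cpow_natCast]; ring,
      show (q:ℂ) ^ (-2:ℂ) = (q*q)⁻¹ by
        rw [show (-2 : ℂ) = -((2 : ℕ) : ℂ) by norm_num, Complex.cpow_neg,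
          Complex.cpow_natCast]; ring_nf]
    rw [div_eq_iff hqq]
    field_simp
    ring
  rw [e2]
  simp only [qnum, neg_add, Complex.cpow_neg, Complex.cpow_add _ _ hq, Complex.cpow_one,
    mul_inv, div_eq_mul_inv]
  obtain ⟨rp, hrp⟩ : ∃ t, (q - q⁻¹)⁻¹ = t := ⟨_, rfl⟩
  rw [hrp]
  obtain ⟨x, hx⟩ : ∃ t, q ^ u = t := ⟨_, rfl⟩
  obtain ⟨y, hy⟩ : ∃ t, q ^ v = t := ⟨_, rfl⟩
  rw [hx] at hX; rw [hy] at hY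
  rw [hx, hy]
  obtain ⟨xp, hxp⟩ : ∃ t, x⁻¹ = t := ⟨_, rfl⟩
  obtain ⟨yp, hyp⟩ : ∃ t, y⁻¹ = t := ⟨_, rfl⟩
  obtain ⟨qp, hqp⟩ : ∃ t, q⁻¹ = t := ⟨_, rfl⟩
  have hx1 : x * xp = 1 := by rw [← hxp]; exact mul_inv_cancel₀ hX
  have hy1 : y * yp = 1 := by rw [← hyp]; exact mul_inv_cancel₀ hY
  have hq1 : q * qp = 1 := by rw [← hqp]; exact mul_inv_cancel₀ hq
  rw [hxp, hyp, hqp]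
  linear_combination
    ((-1:ℂ)*yp^2*rp^3 + yp^2*q*qp*rp^3 + y^2*rp^3 + (-1)*y^2*q*qp*rp^3) * hx1 +
    ((-1:ℂ)*xp^2*rp^3 + xp^2*q*qp*rp^3 + x^2*rp^3 + (-1)*x^2*q*qp*rp^3) * hy1 +
    (yp^2*rp^3 + (-1:ℂ)*y^2*rp^3 + xp^2*rp^3 + (-1)*xp^2*yp^2*rp^3 + (-1)*x^2*rp^3
      + x^2*y^2*rp^3) * hq1

private lemma key_scalar (q : ℂ) (hq : q ≠ 0) (hqq : q - q⁻¹ ≠ 0) (u v : ℂ)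
    (hu : qnum q u ≠ 0) (hv : qnum q v ≠ 0) (huv : qnum q (u + v) ≠ 0) :
    (qnum q (u + v + 1) / qnum q (u + v)) *
      (qnum q 2 - qnum q (u + 1) / qnum q u - qnum q (v + 1) / qnum q v) +
      (qnum q (u + 1) / qnum q u) * (qnum q (v + 1) / qnum q v) = 1 :=
  abstract_key _ _ _ _ _ _ _ hu hv huv (cleared q hq hqq u v)

/-- The Yang-Baxter equation for the renormalised Baxterised elements
`h_i(u) = ([u+1]/[u])·1 - a_i` of the type-A Hecke algebra. -/
theorem h_yang_baxter (N : ℕ) (A : Type*) [Ring A] [Algebra ℂ A]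
    (q : ℂ) (hq : q ≠ 0) (hqq : q - q⁻¹ ≠ 0) (a : ℕ → A)
    (hsq : ∀ i, 1 ≤ i → i ≤ N - 1 → a i * a i = qnum q 2 • a i)
    (hcomm : ∀ i j, 1 ≤ i → i ≤ N - 1 → 1 ≤ j → j ≤ N - 1 → (i + 1 < j ∨ j + 1 < i) →
      a i * a j = a j * a i)
    (hbraid : ∀ i, 1 ≤ i → i + 1 ≤ N - 1 →
      a i * a (i + 1) * a i - a i = a (i + 1) * a i * a (i + 1) - a (i + 1))
    (i : ℕ) (h1 : 1 ≤ i) (h2 : i + 1 ≤ N - 1)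
    (u v : ℂ) (hu : qnum q u ≠ 0) (hv : qnum q v ≠ 0) (huv : qnum q (u + v) ≠ 0) :
    letI h : ℕ → ℂ → A := fun j w => (qnum q (w + 1) / qnum q w) • (1 : A) - a j
    h i u * h (i + 1) (u + v) * h i v = h (i + 1) v * h i (u + v) * h (i + 1) u := by
  exact yb_aux (a i) (a (i + 1))
    (qnum q (u + 1) / qnum q u) (qnum q (v + 1) / qnum q v)
    (qnum q (u + v + 1) / qnum q (u + v)) (qnum q 2)
    (hsq i h1 (le_trans (Nat.le_succ i) h2))
    (hsq (i + 1) (Nat.le_succ_of_le h1) h2)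
    (hbraid i h1 h2)
    (key_scalar q hq hqq u v hu hv huv)
end
end

section
/- In the Iwahori-Hecke algebra of type B_N, the element a_0 := (-q^{-ω} - g_0)/(q^{ω+1} - q^{-ω-1}) satisfies a_0² = ([ω]/[ω+1])·a_0 and a_0 a_1 a_0 a_1 - a_0 a_1 = a_1 a_0 a_1 a_0 - a_1 a_0, where a_1 = q - g_1. -/
set_option maxHeartbeats 1000000

noncomputable section

/-- In the Iwahori-Hecke algebra of type `B_N`, the boundary element
`a₀ = (-q^{-ω} - g₀)/(q^{ω+1} - q^{-ω-1})` satisfies `a₀² = ([ω]/[ω+1]) a₀` and the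
mixed braid-type relation with `a₁ = q - g1`.  Here `w` denotes the fixed complex
number `q^ω`. -/
theorem hecke_typeB_a0_relations (A : Type*) [Ring A] [Algebra ℂ A]
    (q w : ℂ) (hq : q ≠ 0) (hw : w ≠ 0) (hqq : q - q⁻¹ ≠ 0)
    (hd : q * w - (q * w)⁻¹ ≠ 0)
    (g0 g1 : A)
    (hg0 : (g0 + w • (1 : A)) * (g0 + w⁻¹ • (1 : A)) = 0)
    (hg1 : (g1 - q • (1 : A)) * (g1 + q⁻¹ • (1 : A)) = 0)
    (hbraid : g0 * g1 * g0 * g1 = g1 * g0 * g1 * g0) :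
    letI a0 : A := (q * w - (q * w)⁻¹)⁻¹ • (-(w⁻¹) • (1 : A) - g0)
    letI a1 : A := q • (1 : A) - g1
    a0 * a0 = (((w - w⁻¹) / (q - q⁻¹)) / ((q * w - (q * w)⁻¹) / (q - q⁻¹))) • a0 ∧
    a0 * a1 * a0 * a1 - a0 * a1 = a1 * a0 * a1 * a0 - a1 * a0 := by
  have h0 : g0 * g0 = (-(w + w⁻¹)) • g0 - 1 := by
    have h := hg0
    rw [mul_add, add_mul, add_mul, smul_mul_assoc, mul_smul_comm, smul_mul_smul_comm,
      one_mul, mul_one, mul_inv_cancel₀ hw, one_smul] at h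
    simp only [mul_one, one_mul] at h
    linear_combination (norm := module) h
  have h1 : g1 * g1 = (q - q⁻¹) • g1 + 1 := by
    have h := hg1
    rw [mul_add, sub_mul, sub_mul, smul_mul_assoc, mul_smul_comm, smul_mul_smul_comm,
      one_mul, mul_one, mul_inv_cancel₀ hq, one_smul] at h
    simp only [mul_one, one_mul] at h
    linear_combination (norm := module) h
  have r0 : ∀ x : A, g0 * (g0 * x) = (-(w + w⁻¹)) • (g0 * x) - x := by
    intro x
    rw [← mul_assoc, h0, sub_mul, smul_mul_assoc, one_mul]
  have r1 : ∀ x : A, g1 * (g1 * x) = (q - q⁻¹) • (g1 * x) + x := by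
    intro x
    rw [← mul_assoc, h1, add_mul, smul_mul_assoc, one_mul]
  have hb : g1 * (g0 * (g1 * g0)) = g0 * (g1 * (g0 * g1)) := by
    rw [← mul_assoc, ← mul_assoc, ← mul_assoc, ← mul_assoc, ← hbraid]
  set p0 : A := w⁻¹ • (1 : A) + g0 with hp0
  set a1 : A := q • (1 : A) - g1 with ha1
  set c : ℂ := (q * w - (q * w)⁻¹)⁻¹ with hc
  have hA : (q * w - (q * w)⁻¹)⁻¹ • (-(w⁻¹) • (1 : A) - g0) = (-c) • p0 := by
    rw [hp0, hc]; module
  -- key polynomial lemmas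
  have Lsq : p0 * p0 = (w⁻¹ - w) • p0 := by
    rw [hp0]
    simp only [mul_sub, sub_mul, mul_add, add_mul, smul_mul_assoc, mul_smul_comm,
      smul_sub, smul_add, smul_smul, mul_one, one_mul, mul_assoc, h0, h1, r0, r1, hb]
    match_scalars <;> (try ring_nf) <;> (try field_simp [hq, hw]) <;> (try ring)
    -- done
  have L1 : p0 * a1 - a1 * p0 = -(g0 * g1 - g1 * g0) := by
    rw [hp0, ha1]
    simp only [mul_sub, sub_mul, mul_add, add_mul, smul_mul_assoc, mul_smul_comm,
      smul_sub, smul_add, smul_smul, mul_one, one_mul, mul_assoc, h0, h1, r0, r1, hb]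
    match_scalars <;> (try ring_nf) <;> (try field_simp [hq, hw]) <;> (try ring)
    -- done
  have L2 : p0 * a1 * p0 * a1 - a1 * p0 * a1 * p0
      = (q * w - (q * w)⁻¹) • (g0 * g1 - g1 * g0) := by
    rw [hp0, ha1]
    simp only [mul_sub, sub_mul, mul_add, add_mul, smul_mul_assoc, mul_smul_comm,
      smul_sub, smul_add, smul_smul, mul_one, one_mul, mul_assoc, h0, h1, r0, r1, hb]
    match_scalars <;> (try ring_nf) <;> (try field_simp [hq, hw]) <;> (try ring)
    -- done
  have hs : ((w - w⁻¹) / (q - q⁻¹)) / ((q * w - (q * w)⁻¹) / (q - q⁻¹)) = (w - w⁻¹) * c := by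
    rw [hc, div_div_div_cancel_right₀, div_eq_mul_inv]
    exact hqq
  constructor
  · rw [hA, smul_mul_smul_comm, Lsq, smul_smul, hs, smul_smul]
    congr 1
    ring
  · rw [sub_eq_sub_iff_sub_eq_sub, hA]
    have e1 : (-c) • p0 * a1 * ((-c) • p0) * a1 - a1 * ((-c) • p0) * a1 * ((-c) • p0)
        = (c * c) • (p0 * a1 * p0 * a1 - a1 * p0 * a1 * p0) := by
      simp only [smul_mul_assoc, mul_smul_comm, smul_smul]
      module
    have e2 : (-c) • p0 * a1 - a1 * ((-c) • p0) = (-c) • (p0 * a1 - a1 * p0) := by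
      simp only [smul_mul_assoc, mul_smul_comm]
      module
    rw [e1, e2, L1, L2, smul_smul, smul_neg, ← neg_smul, neg_neg]
    congr 1
    rw [hc, mul_assoc, inv_mul_cancel₀ hd, mul_one]
end
end

section
/- The operators a_i := (π_i + 1)·([x_i - x_{i+1} - 1]/[x_i - x_{i+1}]) acting on functions of N variables satisfy the braid-type Hecke relation a_i a_{i+1} a_i - a_i = a_{i+1} a_i a_{i+1} - a_{i+1}. -/
noncomputable section

/-- The operator exchanging the variables `x_i` and `x_{i+1}`. -/
def swapVar (i : ℕ) (x : ℕ → ℂ) : ℕ → ℂ :=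
  fun j => if j = i then x (i + 1) else if j = i + 1 then x i else x j

/-- The symmetrising operator `a_i = (π_i + 1) ∘ (multiplication by
`[x_i - x_{i+1} - 1]/[x_i - x_{i+1}]`)` acting on functions of the variables. -/
noncomputable def aOp (q : ℂ) (i : ℕ) (f : (ℕ → ℂ) → ℂ) : (ℕ → ℂ) → ℂ :=
  fun x =>
    qnum q (swapVar i x i - swapVar i x (i + 1) - 1) / qnum q (swapVar i x i - swapVar i x (i + 1))
      * f (swapVar i x)
    + qnum q (x i - x (i + 1) - 1) / qnum q (x i - x (i + 1)) * f x

lemma swapVar_invol (i : ℕ) (x : ℕ → ℂ) : swapVar i (swapVar i x) = x := by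
  funext j; simp only [swapVar]; split_ifs with h1 h2 <;> simp_all

lemma swapVar_braid (i : ℕ) (x : ℕ → ℂ) :
    swapVar (i+1) (swapVar i (swapVar (i+1) x)) = swapVar i (swapVar (i+1) (swapVar i x)) := by
  funext j; simp only [swapVar]; split_ifs <;> first | rfl | omega

lemma swapVar_a (i : ℕ) (x : ℕ → ℂ) : swapVar i x i = x (i+1) := by simp [swapVar]
lemma swapVar_b (i : ℕ) (x : ℕ → ℂ) : swapVar i x (i+1) = x i := by simp [swapVar]
lemma swapVar_ne (i j : ℕ) (x : ℕ → ℂ) (h1 : j ≠ i) (h2 : j ≠ i + 1) : swapVar i x j = x j := by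
  simp [swapVar, h1, h2]

lemma qnum_ratio (q u v : ℂ) (hq : q ≠ 0) (hqq : q - q⁻¹ ≠ 0) :
    qnum q (u - v - 1) / qnum q (u - v)
      = (q^(u-v) * q⁻¹ - q * (q^(u-v))⁻¹) / (q^(u-v) - (q^(u-v))⁻¹) := by
  have h1 : q ^ (u-v-1) = q^(u-v) * q⁻¹ := by
    rw [show u-v-1 = (u-v)+(-1) by ring, Complex.cpow_add _ _ hq, Complex.cpow_neg,
      Complex.cpow_one]
  have h2 : q ^ (-(u-v-1)) = (q^(u-v))⁻¹ * q := by
    rw [show -(u-v-1) = (-(u-v))+1 by ring, Complex.cpow_add _ _ hq, Complex.cpow_neg,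
      Complex.cpow_one]
  rw [qnum, qnum, div_div_div_comm, div_self hqq, div_one, h1, h2, Complex.cpow_neg]
  ring_nf

lemma qnum_ne_diff (q u v : ℂ) (h : qnum q (u - v) ≠ 0) :
    q ^ (u - v) - (q ^ (u - v))⁻¹ ≠ 0 := by
  intro h0
  apply h
  rw [qnum, Complex.cpow_neg, h0, zero_div]

lemma sq_ne (A : ℂ) (hA0 : A ≠ 0) (hab : A - A⁻¹ ≠ 0) : A^2 - 1 ≠ 0 := by
  have := mul_ne_zero hA0 hab
  rw [mul_sub, mul_inv_cancel₀ hA0] at this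
  rwa [sq]

lemma coefpos (q A : ℂ) (hq : q ≠ 0) (hA0 : A ≠ 0) (hab : A - A⁻¹ ≠ 0) :
    (A * q⁻¹ - q * A⁻¹) / (A - A⁻¹) = (A^2 - q^2) / (q * (A^2 - 1)) := by
  rw [div_eq_div_iff hab (mul_ne_zero hq (sq_ne A hA0 hab))]
  field_simp

lemma coefneg (q A : ℂ) (hq : q ≠ 0) (hA0 : A ≠ 0) (hab : A - A⁻¹ ≠ 0) :
    (A⁻¹ * q⁻¹ - q * A) / (A⁻¹ - A) = (q^2 * A^2 - 1) / (q * (A^2 - 1)) := by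
  have hba : A⁻¹ - A ≠ 0 := fun h => hab (by rw [← neg_sub] at h; simpa using neg_eq_zero.mp h)
  rw [div_eq_div_iff hba (mul_ne_zero hq (sq_ne A hA0 hab))]
  field_simp
  ring

lemma keyh1 (q A B : ℂ) (hq : q ≠ 0) (hA0 : A ≠ 0) (hB0 : B ≠ 0)
    (hab : A - A⁻¹ ≠ 0) (hbc : B - B⁻¹ ≠ 0) (hac : A * B - (A * B)⁻¹ ≠ 0) :
    (A * q⁻¹ - q * A⁻¹) / (A - A⁻¹) * ((A*B * q⁻¹ - q * (A*B)⁻¹) / (A*B - (A*B)⁻¹)) + 1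
      = (B⁻¹ * q⁻¹ - q * B) / (B⁻¹ - B) * ((A*B * q⁻¹ - q * (A*B)⁻¹) / (A*B - (A*B)⁻¹))
        + (A * q⁻¹ - q * A⁻¹) / (A - A⁻¹) * ((B * q⁻¹ - q * B⁻¹) / (B - B⁻¹)) := by
  have hC0 : A * B ≠ 0 := mul_ne_zero hA0 hB0
  have hA2 := sq_ne A hA0 hab
  have hB2 := sq_ne B hB0 hbc
  have hC2 := sq_ne (A*B) hC0 hac
  have dA : q * (A^2 - 1) ≠ 0 := mul_ne_zero hq hA2
  have dB : q * (B^2 - 1) ≠ 0 := mul_ne_zero hq hB2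
  have dC : q * ((A*B)^2 - 1) ≠ 0 := mul_ne_zero hq hC2
  rw [coefpos q A hq hA0 hab, coefpos q B hq hB0 hbc, coefpos q (A*B) hq hC0 hac,
      coefneg q B hq hB0 hbc]
  rw [div_mul_div_comm, div_mul_div_comm, div_mul_div_comm,
      div_add_one (mul_ne_zero dA dC), div_add_div _ _ (mul_ne_zero dB dC) (mul_ne_zero dA dB),
      div_eq_div_iff (mul_ne_zero dA dC) (mul_ne_zero (mul_ne_zero dB dC) (mul_ne_zero dA dB))]
  ring

lemma keyh2 (q A B : ℂ) (hq : q ≠ 0) (hA0 : A ≠ 0) (hB0 : B ≠ 0)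
    (hab : A - A⁻¹ ≠ 0) (hbc : B - B⁻¹ ≠ 0) (hac : A * B - (A * B)⁻¹ ≠ 0) :
    (A⁻¹ * q⁻¹ - q * A) / (A⁻¹ - A) * ((A*B * q⁻¹ - q * (A*B)⁻¹) / (A*B - (A*B)⁻¹))
        + (A * q⁻¹ - q * A⁻¹) / (A - A⁻¹) * ((B * q⁻¹ - q * B⁻¹) / (B - B⁻¹))
      = (B * q⁻¹ - q * B⁻¹) / (B - B⁻¹) * ((A*B * q⁻¹ - q * (A*B)⁻¹) / (A*B - (A*B)⁻¹)) + 1 := by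
  have hC0 : A * B ≠ 0 := mul_ne_zero hA0 hB0
  have hA2 := sq_ne A hA0 hab
  have hB2 := sq_ne B hB0 hbc
  have hC2 := sq_ne (A*B) hC0 hac
  have dA : q * (A^2 - 1) ≠ 0 := mul_ne_zero hq hA2
  have dB : q * (B^2 - 1) ≠ 0 := mul_ne_zero hq hB2
  have dC : q * ((A*B)^2 - 1) ≠ 0 := mul_ne_zero hq hC2
  rw [coefpos q A hq hA0 hab, coefpos q B hq hB0 hbc, coefpos q (A*B) hq hC0 hac,
      coefneg q A hq hA0 hab]
  rw [div_mul_div_comm, div_mul_div_comm, div_mul_div_comm,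
      div_add_one (mul_ne_zero dB dC),
      div_add_div _ _ (mul_ne_zero dA dC) (mul_ne_zero dA dB),
      div_eq_div_iff (mul_ne_zero (mul_ne_zero dA dC) (mul_ne_zero dA dB)) (mul_ne_zero dB dC)]
  ring

set_option maxHeartbeats 1000000 in
/-- The symmetrising operators satisfy the braid-type Hecke relation
`a_i a_{i+1} a_i - a_i = a_{i+1} a_i a_{i+1} - a_{i+1}`. -/
theorem aOp_braid (q : ℂ) (hq : q ≠ 0) (hqq : q - q⁻¹ ≠ 0)
    (i : ℕ) (f : (ℕ → ℂ) → ℂ) (x : ℕ → ℂ)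
    (hx : ∀ j k, i ≤ j → j ≤ i + 2 → i ≤ k → k ≤ i + 2 → j ≠ k →
      qnum q (x j - x k) ≠ 0) :
    aOp q i (aOp q (i + 1) (aOp q i f)) x - aOp q i f x
      = aOp q (i + 1) (aOp q i (aOp q (i + 1) f)) x - aOp q (i + 1) f x := by
  simp only [aOp, swapVar_invol, swapVar_braid, swapVar_a, swapVar_b]
  rw [swapVar_ne (i+1) i x (by omega) (by omega),
      swapVar_ne (i+1) i (swapVar i x) (by omega) (by omega)]
  simp only [swapVar_ne i (i+1+1) x (by omega) (by omega),
      swapVar_ne i (i+1+1) (swapVar (i+1) x) (by omega) (by omega),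
      swapVar_b (i+1) x, swapVar_a, swapVar_b]
  generalize f x = T0
  generalize f (swapVar i x) = T1
  generalize f (swapVar (i+1) x) = T2
  generalize f (swapVar i (swapVar (i+1) x)) = T3
  generalize f (swapVar (i+1) (swapVar i x)) = T4
  generalize f (swapVar i (swapVar (i+1) (swapVar i x))) = T5
  set a := x i with ha
  set b := x (i+1) with hb
  set c := x (i+1+1) with hc
  simp only [qnum_ratio q _ _ hq hqq]
  set A := q ^ (a - b) with hA
  set B := q ^ (b - c) with hB
  have pba : q ^ (b - a) = A⁻¹ := by rw [hA, show b - a = -(a-b) by ring, Complex.cpow_neg]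
  have pcb : q ^ (c - b) = B⁻¹ := by rw [hB, show c - b = -(b-c) by ring, Complex.cpow_neg]
  have pac : q ^ (a - c) = A * B := by
    rw [hA, hB, show a - c = (a-b) + (b-c) by ring, Complex.cpow_add _ _ hq]
  have pca : q ^ (c - a) = (A * B)⁻¹ := by
    rw [show c - a = -((a-b)+(b-c)) by ring, Complex.cpow_neg, Complex.cpow_add _ _ hq, hA, hB]
  have h2 : i + 1 + 1 = i + 2 := by omega
  have hab : A - A⁻¹ ≠ 0 := by
    have := qnum_ne_diff q a b (hx i (i+1) (by omega) (by omega) (by omega) (by omega) (by omega))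
    rwa [← hA] at this
  have hbc : B - B⁻¹ ≠ 0 := by
    have := qnum_ne_diff q b c
      (by rw [hb, hc, h2]; exact hx (i+1) (i+2) (by omega) (by omega) (by omega) (by omega) (by omega))
    rwa [← hB] at this
  have hac : A * B - (A*B)⁻¹ ≠ 0 := by
    have := qnum_ne_diff q a c
      (by rw [ha, hc, h2]; exact hx i (i+2) (by omega) (by omega) (by omega) (by omega) (by omega))
    rwa [pac] at this
  have hA0 : A ≠ 0 := by simp [hA, Complex.cpow_eq_zero_iff, hq]
  have hB0 : B ≠ 0 := by simp [hB, Complex.cpow_eq_zero_iff, hq]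
  rw [pba, pcb, pac, pca]
  simp only [inv_inv]
  have h1 := keyh1 q A B hq hA0 hB0 hab hbc hac
  have h2' := keyh2 q A B hq hA0 hB0 hab hbc hac
  linear_combination
    ((B⁻¹ * q⁻¹ - q * B) / (B⁻¹ - B) * T2 + (B * q⁻¹ - q * B⁻¹) / (B - B⁻¹) * T0) * h1
    + ((A⁻¹ * q⁻¹ - q * A) / (A⁻¹ - A) * T1 + (A * q⁻¹ - q * A⁻¹) / (A - A⁻¹) * T0) * h2'
end
end

section
/- If a sum-decomposition lemma holds: for the ordered product H_{i,i+r}(u) := h_i(u)h_{i+1}(u+1)⋯h_{i+r}(u+r) of renormalised Baxterised Hecke elements, one has for generic u, v the expansion H_{i,i+r}(u) = H_{i,i+r}(u+v) + Σ_{k=0}^{r} ([v]/([u+k][u+v+k]))·H_{i,i+k-1}(u+v)·H_{i+k+1,i+r}(u+k+1), where H_{i,i-1}(w) := 1. -/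
noncomputable section
open scoped BigOperators

/-- The renormalised Baxterised element `h_i(u) = ([u+1]/[u])·1 - a_i`. -/
noncomputable def hOp {A : Type*} [Ring A] [Algebra ℂ A] (q : ℂ) (a : ℕ → A)
    (i : ℕ) (u : ℂ) : A :=
  (qnum q (u + 1) / qnum q u) • (1 : A) - a i

/-- The ordered product `H_{i,i+n-1}(u) = h_i(u) h_{i+1}(u+1) ⋯ h_{i+n-1}(u+n-1)`,
with the empty product equal to `1`. -/
noncomputable def Hprod {A : Type*} [Ring A] [Algebra ℂ A] (q : ℂ) (a : ℕ → A)
    (i n : ℕ) (u : ℂ) : A :=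
  ((List.range n).map (fun k => hOp q a (i + k) (u + (k : ℂ)))).prod

lemma cpow_ne' {q : ℂ} (hq : q ≠ 0) (x : ℂ) : q ^ x ≠ 0 := by
  simp [Complex.cpow_eq_zero_iff, hq]

lemma qnum_prod (q : ℂ) (hq : q ≠ 0) (hqq : q - q⁻¹ ≠ 0) (w v : ℂ) :
    qnum q (w+1) * qnum q (w+v) - qnum q (w+v+1) * qnum q w = qnum q v := by
  have hE : q ^ w ≠ 0 := cpow_ne' hq w
  have hV : q ^ v ≠ 0 := cpow_ne' hq v
  have hD2 : (q - q⁻¹) * (q - q⁻¹) ≠ 0 := mul_ne_zero hqq hqq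
  unfold qnum
  rw [show w+v+1 = (w+v)+1 by ring]
  simp only [Complex.cpow_neg, Complex.cpow_add _ _ hq, Complex.cpow_one]
  generalize q ^ w = E at hE ⊢
  generalize q ^ v = V at hV ⊢
  rw [div_mul_div_comm, div_mul_div_comm, div_sub_div_same, div_eq_div_iff hD2 hqq]
  have e1 : E * E⁻¹ = 1 := mul_inv_cancel₀ hE
  simp only [mul_inv]
  linear_combination (q^2*V - q^2*V⁻¹ + q⁻¹^2*V - q⁻¹^2*V⁻¹ - 2*q*q⁻¹*V + 2*q*q⁻¹*V⁻¹) * e1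

lemma qnum_div (q : ℂ) (hq : q ≠ 0) (hqq : q - q⁻¹ ≠ 0) (w v : ℂ)
    (h1 : qnum q w ≠ 0) (h2 : qnum q (w+v) ≠ 0) :
    qnum q (w+1) / qnum q w
      = qnum q (w+v+1) / qnum q (w+v) + qnum q v / (qnum q w * qnum q (w+v)) := by
  have h : qnum q (w+1)/qnum q w - qnum q (w+v+1)/qnum q (w+v)
      = qnum q v/(qnum q w * qnum q (w+v)) := by
    rw [div_sub_div _ _ h1 h2, mul_comm (qnum q w) (qnum q (w+v+1)),
      qnum_prod q hq hqq w v]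
  linear_combination h

lemma hOp_shift {A : Type*} [Ring A] [Algebra ℂ A] (q : ℂ) (hq : q ≠ 0)
    (hqq : q - q⁻¹ ≠ 0) (a : ℕ → A) (j : ℕ) (w v : ℂ)
    (h1 : qnum q w ≠ 0) (h2 : qnum q (w+v) ≠ 0) :
    hOp q a j w
      = hOp q a j (w+v) + (qnum q v / (qnum q w * qnum q (w+v))) • (1 : A) := by
  unfold hOp
  rw [qnum_div q hq hqq w v h1 h2, add_smul]
  abel

lemma Hprod_succ {A : Type*} [Ring A] [Algebra ℂ A] (q : ℂ) (a : ℕ → A)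
    (i n : ℕ) (u : ℂ) :
    Hprod q a i (n+1) u = Hprod q a i n u * hOp q a (i+n) (u + (n : ℂ)) := by
  simp [Hprod, List.range_succ]

lemma Hprod_zero {A : Type*} [Ring A] [Algebra ℂ A] (q : ℂ) (a : ℕ → A)
    (i : ℕ) (u : ℂ) : Hprod q a i 0 u = 1 := by simp [Hprod]

lemma Hprod_one {A : Type*} [Ring A] [Algebra ℂ A] (q : ℂ) (a : ℕ → A)
    (i : ℕ) (u : ℂ) : Hprod q a i 1 u = hOp q a i u := by
  rw [Hprod, show List.range 1 = [0] from rfl]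
  simp

/-- The sum-decomposition lemma: for generic `u, v`,
`H_{i,i+r}(u) = H_{i,i+r}(u+v)
  + Σ_{k=0}^{r} ([v]/([u+k][u+v+k])) H_{i,i+k-1}(u+v) H_{i+k+1,i+r}(u+k+1)`. -/
theorem Hprod_sum_decomposition (A : Type*) [Ring A] [Algebra ℂ A]
    (q : ℂ) (hq : q ≠ 0) (hqq : q - q⁻¹ ≠ 0) (a : ℕ → A)
    (hsq : ∀ i, a i * a i = qnum q 2 • a i)
    (hcomm : ∀ i j, i + 1 < j → a i * a j = a j * a i)
    (hbraid : ∀ i, a i * a (i + 1) * a i - a i = a (i + 1) * a i * a (i + 1) - a (i + 1))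
    (i r : ℕ) (u v : ℂ)
    (hgen : ∀ k : ℕ, k ≤ r → qnum q (u + (k : ℂ)) ≠ 0 ∧ qnum q (u + v + (k : ℂ)) ≠ 0) :
    Hprod q a i (r + 1) u
      = Hprod q a i (r + 1) (u + v)
        + ∑ k ∈ Finset.range (r + 1),
            (qnum q v / (qnum q (u + (k : ℂ)) * qnum q (u + v + (k : ℂ)))) •
              (Hprod q a i k (u + v) * Hprod q a (i + k + 1) (r - k) (u + (k : ℂ) + 1)) := by
  induction r with
  | zero =>
    have h1 := (hgen 0 le_rfl).1
    have h2 := (hgen 0 le_rfl).2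
    simp only [Nat.cast_zero, add_zero] at h1 h2
    have hs := hOp_shift q hq hqq a i u v h1 h2
    rw [show (0:ℕ)+1 = 1 from rfl, Finset.sum_range_one]
    simp only [Nat.cast_zero, add_zero, Nat.sub_self, Hprod_zero, mul_one, one_mul, Hprod_one]
    rw [hs]
  | succ r ih =>
    have IH := ih (fun k hk => hgen k (hk.trans r.le_succ))
    have h1 := (hgen (r+1) le_rfl).1
    have h2' := (hgen (r+1) le_rfl).2
    have h2 : qnum q (u + ((r+1 : ℕ) : ℂ) + v) ≠ 0 := by
      rwa [show u + ((r+1 : ℕ) : ℂ) + v = u + v + ((r+1 : ℕ) : ℂ) by ring]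
    have hs := hOp_shift q hq hqq a (i+(r+1)) (u + ((r+1 : ℕ) : ℂ)) v h1 h2
    rw [show u + ((r+1 : ℕ) : ℂ) + v = u + v + ((r+1 : ℕ) : ℂ) by ring] at hs
    have hA : Hprod q a i (r+1) (u+v) * hOp q a (i+(r+1)) (u + ((r+1 : ℕ) : ℂ))
        = Hprod q a i (r+1+1) (u+v)
          + (qnum q v / (qnum q (u + ((r+1 : ℕ) : ℂ)) * qnum q (u + v + ((r+1 : ℕ) : ℂ)))) •
              Hprod q a i (r+1) (u+v) := by
      rw [hs, mul_add, mul_smul_comm, mul_one, ← Hprod_succ]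
    have hB : ∀ k ∈ Finset.range (r+1),
        ((qnum q v / (qnum q (u + (k : ℂ)) * qnum q (u + v + (k : ℂ)))) •
            (Hprod q a i k (u+v) * Hprod q a (i+k+1) (r-k) (u + (k : ℂ) + 1)))
          * hOp q a (i+(r+1)) (u + ((r+1 : ℕ) : ℂ))
        = (qnum q v / (qnum q (u + (k : ℂ)) * qnum q (u + v + (k : ℂ)))) •
            (Hprod q a i k (u+v) * Hprod q a (i+k+1) (r+1-k) (u + (k : ℂ) + 1)) := by
      intro k hk
      have hkr : k ≤ r := Nat.lt_succ_iff.mp (Finset.mem_range.mp hk)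
      have hs2 := Hprod_succ q a (i+k+1) (r-k) (u + (k : ℂ) + 1)
      have e1 : i+k+1+(r-k) = i+(r+1) := by omega
      have e2 : u + (k : ℂ) + 1 + ((r-k : ℕ) : ℂ) = u + ((r+1 : ℕ) : ℂ) := by
        rw [Nat.cast_sub hkr]; push_cast; ring
      have e3 : r-k+1 = r+1-k := by omega
      rw [e1, e2, e3] at hs2
      rw [smul_mul_assoc, mul_assoc, ← hs2]
    calc Hprod q a i (r+1+1) u
        = Hprod q a i (r+1) u * hOp q a (i+(r+1)) (u + ((r+1 : ℕ) : ℂ)) := Hprod_succ ..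
      _ = (Hprod q a i (r+1) (u+v)
            + ∑ k ∈ Finset.range (r+1),
                (qnum q v / (qnum q (u + (k : ℂ)) * qnum q (u + v + (k : ℂ)))) •
                  (Hprod q a i k (u+v) * Hprod q a (i+k+1) (r-k) (u + (k : ℂ) + 1)))
            * hOp q a (i+(r+1)) (u + ((r+1 : ℕ) : ℂ)) := by rw [IH]
      _ = Hprod q a i (r+1) (u+v) * hOp q a (i+(r+1)) (u + ((r+1 : ℕ) : ℂ))
            + ∑ k ∈ Finset.range (r+1),
                ((qnum q v / (qnum q (u + (k : ℂ)) * qnum q (u + v + (k : ℂ)))) •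
                  (Hprod q a i k (u+v) * Hprod q a (i+k+1) (r-k) (u + (k : ℂ) + 1)))
                * hOp q a (i+(r+1)) (u + ((r+1 : ℕ) : ℂ)) := by
          rw [add_mul, Finset.sum_mul]
      _ = Hprod q a i (r+1+1) (u+v)
            + (qnum q v / (qnum q (u + ((r+1 : ℕ) : ℂ)) * qnum q (u + v + ((r+1 : ℕ) : ℂ)))) •
                Hprod q a i (r+1) (u+v)
            + ∑ k ∈ Finset.range (r+1),
                (qnum q v / (qnum q (u + (k : ℂ)) * qnum q (u + v + (k : ℂ)))) •
                  (Hprod q a i k (u+v) * Hprod q a (i+k+1) (r+1-k) (u + (k : ℂ) + 1)) := by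
          rw [hA, Finset.sum_congr rfl hB]
      _ = Hprod q a i (r+1+1) (u+v)
            + ∑ k ∈ Finset.range (r+1+1),
                (qnum q v / (qnum q (u + (k : ℂ)) * qnum q (u + v + (k : ℂ)))) •
                  (Hprod q a i k (u+v) * Hprod q a (i+k+1) (r+1-k) (u + (k : ℂ) + 1)) := by
          rw [Finset.sum_range_succ
            (fun k => (qnum q v / (qnum q (u + (k : ℂ)) * qnum q (u + v + (k : ℂ)))) •
              (Hprod q a i k (u+v) * Hprod q a (i+k+1) (r+1-k) (u + (k : ℂ) + 1))) (r+1),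
            Nat.sub_self, Hprod_zero, mul_one]
          abel
end
end

section
/- Modulo the left ideal generated by {X·a_k : i ≤ k ≤ i+r} for arbitrary algebra elements X, the ordered product H_{i,i+r}(u) = h_i(u)⋯h_{i+r}(u+r) is congruent to the scalar [u+r+1]/[u]. That is, H_{i,i+r}(u) - ([u+r+1]/[u])·1 lies in the linear span of elements of the form X·a_k with i ≤ k ≤ i+r. -/
noncomputable section

/-- Modulo the span `A_{i,i+r}` of elements `X·a_k` with `i ≤ k ≤ i+r`, the product
`H_{i,i+r}(u)` equals the scalar `[u+r+1]/[u]`. -/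
theorem Hprod_evaluation_mod (A : Type*) [Ring A] [Algebra ℂ A]
    (q : ℂ) (hq : q ≠ 0) (hqq : q - q⁻¹ ≠ 0) (a : ℕ → A)
    (hsq : ∀ i, a i * a i = qnum q 2 • a i)
    (hcomm : ∀ i j, i + 1 < j → a i * a j = a j * a i)
    (hbraid : ∀ i, a i * a (i + 1) * a i - a i = a (i + 1) * a i * a (i + 1) - a (i + 1))
    (i r : ℕ) (u : ℂ)
    (hgen : ∀ k : ℕ, k ≤ r → qnum q (u + (k : ℂ)) ≠ 0) :
    Hprod q a i (r + 1) u - (qnum q (u + (r : ℂ) + 1) / qnum q u) • (1 : A)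
      ∈ Submodule.span ℂ {y : A | ∃ X : A, ∃ k : ℕ, i ≤ k ∧ k ≤ i + r ∧ y = X * a k} := by
  set S := Submodule.span ℂ {y : A | ∃ X : A, ∃ k : ℕ, i ≤ k ∧ k ≤ i + r ∧ y = X * a k}
    with hS
  have hmem : ∀ (X : A) (k : ℕ), i ≤ k → k ≤ i + r → X * a k ∈ S := by
    intro X k h1 h2
    exact Submodule.subset_span ⟨X, k, h1, h2, rfl⟩
  have hBne : qnum q u ≠ 0 := by simpa using hgen 0 (Nat.zero_le r)
  have key : ∀ n : ℕ, n ≤ r + 1 →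
      Hprod q a i n u - (qnum q (u + (n : ℂ)) / qnum q u) • (1 : A) ∈ S := by
    intro n
    induction n with
    | zero =>
      intro _
      have h0 : Hprod q a i 0 u - (qnum q (u + ((0 : ℕ) : ℂ)) / qnum q u) • (1 : A) = 0 := by
        simp [Hprod, div_self hBne]
      rw [h0]
      exact S.zero_mem
    | succ n ih =>
      intro hn
      have hnr : n ≤ r := Nat.lt_succ_iff.mp hn
      have hstep : Hprod q a i (n + 1) u
          = Hprod q a i n u * hOp q a (i + n) (u + (n : ℂ)) := by
        simp [Hprod, List.range_succ]
      have ihn := ih (Nat.le_succ_of_le hnr)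
      set c : ℂ := qnum q (u + (n : ℂ)) / qnum q u with hc
      set e : ℂ := qnum q (u + (n : ℂ) + 1) / qnum q (u + (n : ℂ)) with he
      set s : A := Hprod q a i n u - c • (1 : A) with hs
      have hsS : s ∈ S := ihn
      have hsplit : Hprod q a i n u = c • (1 : A) + s := by rw [hs]; abel
      have hAne : qnum q (u + (n : ℂ)) ≠ 0 := hgen n hnr
      have hscal : qnum q (u + ((n : ℂ) + 1)) / qnum q u = e * c := by
        rw [hc, he]; field_simp; ring_nf
      have hOpeq : hOp q a (i + n) (u + (n : ℂ)) = e • (1 : A) - a (i + n) := rfl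
      have heq2 : Hprod q a i (n + 1) u - (qnum q (u + ((n : ℂ) + 1)) / qnum q u) • (1 : A)
          = e • s - (c • a (i + n) + s * a (i + n)) := by
        rw [hstep, hsplit, hOpeq, hscal]
        simp only [add_mul, mul_sub, smul_mul_assoc, one_mul, mul_smul_comm, smul_smul,
          mul_one, smul_add]
        abel
      have goal' : Hprod q a i (n + 1) u
          - (qnum q (u + (((n : ℕ) + 1 : ℕ) : ℂ)) / qnum q u) • (1 : A) ∈ S := by
        push_cast
        rw [heq2]
        refine S.sub_mem (S.smul_mem e hsS) (S.add_mem ?_ (hmem s _ (Nat.le_add_right i n)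
          (by omega)))
        have : a (i + n) ∈ S := by
          have := hmem 1 (i + n) (Nat.le_add_right i n) (by omega)
          rwa [one_mul] at this
        exact S.smul_mem c this
      exact goal'
  have hfin := key (r + 1) le_rfl
  have heq : (u + (((r : ℕ) + 1 : ℕ) : ℂ)) = u + (r : ℂ) + 1 := by push_cast; ring
  rwa [heq] at hfin
end
end

section
/- Modulo the span A_{i,i+r-1} of right multiples X·a_k for i ≤ k ≤ i+r-1, one has H_{i,i+r}(u) ≡ H_{i,i+r}(u+v) + ([v]/([u][u+v]))·H_{i+1,i+r}(1), for all r ≥ 0, where H_{i+1,i}(1) := 1. -/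
noncomputable section

namespace HAux

lemma cpow_ne_zero {q : ℂ} (hq : q ≠ 0) (x : ℂ) : q ^ x ≠ 0 :=
  fun h => hq ((Complex.cpow_eq_zero_iff q x).mp h).1

lemma cross_aux (X Y Z : ℂ) (hX : X ≠ 0) (hY : Y ≠ 0) (hZ : Z ≠ 0) :
    (X * Z - (X * Z)⁻¹) * (X * Y - (X * Y)⁻¹)
      - (X - X⁻¹) * (X * Y * Z - (X * Y * Z)⁻¹)
      = (Y - Y⁻¹) * (Z - Z⁻¹) := by
  have h : ∀ w : ℂ, w ≠ 0 → w - w⁻¹ = (w ^ 2 - 1) / w := by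
    intro w hw; field_simp
  rw [h _ (mul_ne_zero hX hZ), h _ (mul_ne_zero hX hY), h _ hX,
    h _ (mul_ne_zero (mul_ne_zero hX hY) hZ), h _ hY, h _ hZ,
    div_mul_div_comm, div_mul_div_comm, div_mul_div_comm,
    div_sub_div _ _ (mul_ne_zero (mul_ne_zero hX hZ) (mul_ne_zero hX hY))
      (mul_ne_zero hX (mul_ne_zero (mul_ne_zero hX hY) hZ)),
    div_eq_div_iff (by simp [hX, hY, hZ, mul_ne_zero]) (mul_ne_zero hY hZ)]
  ring

lemma qnum_cross {q : ℂ} (hq : q ≠ 0) (u v s : ℂ) :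
    qnum q (u + s) * qnum q (u + v) - qnum q u * qnum q (u + v + s)
      = qnum q v * qnum q s := by
  unfold qnum
  rw [div_mul_div_comm, div_mul_div_comm, div_mul_div_comm, ← sub_div]
  congr 1
  have h1 : ∀ x y : ℂ, q ^ (x + y) = q ^ x * q ^ y := fun x y => Complex.cpow_add x y hq
  have h2 : ∀ x : ℂ, q ^ (-x) = (q ^ x)⁻¹ := fun x => Complex.cpow_neg q x
  simp only [h2, h1]
  exact cross_aux _ _ _ (cpow_ne_zero hq u) (cpow_ne_zero hq v) (cpow_ne_zero hq s)

lemma qnum_one {q : ℂ} (hqq : q - q⁻¹ ≠ 0) : qnum q 1 = 1 := by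
  unfold qnum
  rw [Complex.cpow_one, Complex.cpow_neg, Complex.cpow_one, div_self hqq]

lemma qnum_div_identity {q : ℂ} (hq : q ≠ 0) {u v : ℂ} (s : ℂ)
    (hu : qnum q u ≠ 0) (huv : qnum q (u + v) ≠ 0) :
    qnum q (u + s) / qnum q u - qnum q (u + v + s) / qnum q (u + v)
      = qnum q v * qnum q s / (qnum q u * qnum q (u + v)) := by
  field_simp
  linear_combination qnum_cross hq u v s

variable {A : Type*} [Ring A] [Algebra ℂ A]

lemma Hprod_zero (q : ℂ) (a : ℕ → A) (i : ℕ) (u : ℂ) : Hprod q a i 0 u = 1 := by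
  simp [Hprod]

lemma Hprod_succ (q : ℂ) (a : ℕ → A) (i n : ℕ) (u : ℂ) :
    Hprod q a i (n + 1) u = Hprod q a i n u * hOp q a (i + n) (u + (n : ℂ)) := by
  unfold Hprod
  rw [List.range_succ, List.map_append, List.prod_append]
  simp

/-- The span of right multiples `X · a k` with `i ≤ k ≤ i + m - 1`. -/
def S (a : ℕ → A) (i m : ℕ) : Submodule ℂ A :=
  Submodule.span ℂ {y : A | ∃ X : A, ∃ k : ℕ, i ≤ k ∧ k + 1 ≤ i + m ∧ y = X * a k}

lemma S_le (a : ℕ → A) {i m i' m' : ℕ} (h1 : i' ≤ i) (h2 : i + m ≤ i' + m') :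
    S a i m ≤ S a i' m' := by
  apply Submodule.span_mono
  rintro y ⟨X, k, hk1, hk2, rfl⟩
  exact ⟨X, k, le_trans h1 hk1, le_trans hk2 h2, rfl⟩

lemma S_mul_a {a : ℕ → A} (hcomm : ∀ i j, i + 1 < j → a i * a j = a j * a i)
    {i m : ℕ} {x : A} (hx : x ∈ S a i m) {j : ℕ} (hj : i + m < j) :
    x * a j ∈ S a i m := by
  induction hx using Submodule.span_induction with
  | mem y hy =>
    obtain ⟨X, k, hk1, hk2, rfl⟩ := hy
    have hc : a k * a j = a j * a k := hcomm k j (lt_of_le_of_lt hk2 hj)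
    have : X * a k * a j = (X * a j) * a k := by rw [mul_assoc, hc, ← mul_assoc]
    rw [this]
    exact Submodule.subset_span ⟨X * a j, k, hk1, hk2, rfl⟩
  | zero => rw [zero_mul]; exact Submodule.zero_mem _
  | add x y hx hy ihx ihy => rw [add_mul]; exact Submodule.add_mem _ ihx ihy
  | smul c x hx ihx => rw [smul_mul_assoc]; exact Submodule.smul_mem _ _ ihx

/-- Expansion lemma: `H_{i,i+r}(u) ≡ ([u+r+1]/[u])·1 - H_{i,i+r-1}(u)·a_{i+r}` modulo
`S a i r`. -/
lemma E (q : ℂ) (a : ℕ → A) (i : ℕ) (u : ℂ) :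
    ∀ r : ℕ, (∀ k : ℕ, 1 ≤ k → k ≤ r → qnum q (u + (k : ℂ)) ≠ 0) →
    Hprod q a i (r + 1) u - (qnum q (u + (r : ℂ) + 1) / qnum q u) • (1 : A)
      + Hprod q a i r u * a (i + r) ∈ S a i r := by
  intro r
  induction r with
  | zero =>
    intro _
    have h : Hprod q a i (0 + 1) u - (qnum q (u + ((0 : ℕ) : ℂ) + 1) / qnum q u) • (1 : A)
        + Hprod q a i 0 u * a (i + 0) = 0 := by
      rw [Hprod_succ, Hprod_zero, hOp]
      push_cast
      simp only [add_zero, one_mul]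
      abel
    rw [h]; exact Submodule.zero_mem _
  | succ r ih =>
    intro hyp
    have ih' := ih (fun k hk1 hk2 => hyp k hk1 (le_trans hk2 (Nat.le_succ r)))
    have hX : qnum q (u + (r : ℂ) + 1) ≠ 0 := by
      have := hyp (r + 1) (Nat.le_add_left 1 r) le_rfl
      push_cast at this
      rwa [← add_assoc] at this
    have hC : (qnum q (u + (r : ℂ) + 1 + 1) / qnum q (u + (r : ℂ) + 1))
          * (qnum q (u + (r : ℂ) + 1) / qnum q u)
        = qnum q (u + (r : ℂ) + 1 + 1) / qnum q u := by
      rw [div_mul_div_comm, mul_comm (qnum q (u + (r : ℂ) + 1 + 1)),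
        mul_div_mul_left _ _ hX]
    have hkey : Hprod q a i (r + 1 + 1) u
          - (qnum q (u + ((r + 1 : ℕ) : ℂ) + 1) / qnum q u) • (1 : A)
          + Hprod q a i (r + 1) u * a (i + (r + 1))
        = (qnum q (u + (r : ℂ) + 1 + 1) / qnum q (u + (r : ℂ) + 1)) •
            (Hprod q a i (r + 1) u - (qnum q (u + (r : ℂ) + 1) / qnum q u) • (1 : A)
              + Hprod q a i r u * a (i + r))
          - ((qnum q (u + (r : ℂ) + 1 + 1) / qnum q (u + (r : ℂ) + 1)) •
              Hprod q a i r u) * a (i + r) := by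
      rw [Hprod_succ q a i (r + 1) u, hOp]
      push_cast
      rw [show u + ((r : ℂ) + 1) = u + (r : ℂ) + 1 from by ring, ← hC]
      simp only [mul_sub, mul_smul_comm, mul_one, smul_sub, smul_add, smul_smul,
        smul_mul_assoc]
      module
    rw [hkey]
    refine Submodule.sub_mem _ ?_ ?_
    · exact S_le a le_rfl (by omega) (Submodule.smul_mem _ _ ih')
    · exact Submodule.subset_span
        ⟨(qnum q (u + (r : ℂ) + 1 + 1) / qnum q (u + (r : ℂ) + 1)) • Hprod q a i r u,
          i + r, Nat.le_add_right i r, by omega, rfl⟩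

lemma scalar0 {q : ℂ} (hq : q ≠ 0) (hqq : q - q⁻¹ ≠ 0) {u v : ℂ} (w : ℂ)
    (hu : qnum q u ≠ 0) (huv : qnum q (u + v) ≠ 0) :
    qnum q (u + (w + 1) + 1) / qnum q u - qnum q (u + v + (w + 1) + 1) / qnum q (u + v)
      - (qnum q v / (qnum q u * qnum q (u + v))) * (qnum q (1 + w + 1) / qnum q 1) = 0 := by
  have h := qnum_div_identity hq (w + 2) hu huv
  rw [show u + (w + 1) + 1 = u + (w + 2) from by ring,
    show u + v + (w + 1) + 1 = u + v + (w + 2) from by ring,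
    show (1 : ℂ) + w + 1 = w + 2 from by ring, qnum_one hqq, div_one, h]
  field_simp
  ring

lemma main (q : ℂ) (hq : q ≠ 0) (hqq : q - q⁻¹ ≠ 0) (a : ℕ → A)
    (hcomm : ∀ i j, i + 1 < j → a i * a j = a j * a i) (i : ℕ) (u v : ℂ) :
    ∀ r : ℕ, (∀ k : ℕ, k ≤ r →
      qnum q (u + (k : ℂ)) ≠ 0 ∧ qnum q (u + v + (k : ℂ)) ≠ 0 ∧
      qnum q ((k : ℂ) + 1) ≠ 0) →
    Hprod q a i (r + 1) u - Hprod q a i (r + 1) (u + v)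
        - (qnum q v / (qnum q u * qnum q (u + v))) • Hprod q a (i + 1) r 1
      ∈ S a i r := by
  intro r
  induction r with
  | zero =>
    intro hgen
    have hu : qnum q u ≠ 0 := by simpa using (hgen 0 le_rfl).1
    have huv : qnum q (u + v) ≠ 0 := by simpa using (hgen 0 le_rfl).2.1
    have hs : qnum q (u + 1) / qnum q u - qnum q (u + v + 1) / qnum q (u + v)
        = qnum q v / (qnum q u * qnum q (u + v)) := by
      have h := qnum_div_identity hq 1 hu huv
      rwa [qnum_one hqq, mul_one] at h
    have h : Hprod q a i (0 + 1) u - Hprod q a i (0 + 1) (u + v)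
        - (qnum q v / (qnum q u * qnum q (u + v))) • Hprod q a (i + 1) 0 1 = 0 := by
      simp only [Hprod_succ, Hprod_zero, hOp]
      push_cast
      simp only [add_zero, one_mul]
      rw [← hs]
      module
    rw [h]; exact Submodule.zero_mem _
  | succ r ih =>
    intro hgen
    have hgen' := fun k hk => hgen k (le_trans hk (Nat.le_succ r))
    have hu : qnum q u ≠ 0 := by simpa using (hgen 0 (Nat.zero_le _)).1
    have huv : qnum q (u + v) ≠ 0 := by simpa using (hgen 0 (Nat.zero_le _)).2.1
    have e1 := E q a i u (r + 1) (fun k _ hk2 => (hgen k hk2).1)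
    have e2 := E q a i (u + v) (r + 1) (fun k _ hk2 => (hgen k hk2).2.1)
    have e3 := E q a (i + 1) 1 r (fun k hk1 hk2 => by
      have := (hgen k (le_trans hk2 (Nat.le_succ r))).2.2
      rwa [add_comm ((k : ℂ)) 1] at this)
    have ihm := ih hgen'
    have hD : (Hprod q a i (r + 1) u - Hprod q a i (r + 1) (u + v)
        - (qnum q v / (qnum q u * qnum q (u + v))) • Hprod q a (i + 1) r 1)
          * a (i + (r + 1)) ∈ S a i r :=
      S_mul_a hcomm ihm (by omega)
    have hsc := scalar0 hq hqq (r : ℂ) hu huv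
    have hia : i + 1 + r = i + (r + 1) := by omega
    have hkey : Hprod q a i (r + 1 + 1) u - Hprod q a i (r + 1 + 1) (u + v)
          - (qnum q v / (qnum q u * qnum q (u + v))) • Hprod q a (i + 1) (r + 1) 1
        = (Hprod q a i (r + 1 + 1) u
              - (qnum q (u + ((r + 1 : ℕ) : ℂ) + 1) / qnum q u) • (1 : A)
              + Hprod q a i (r + 1) u * a (i + (r + 1)))
          - (Hprod q a i (r + 1 + 1) (u + v)
              - (qnum q (u + v + ((r + 1 : ℕ) : ℂ) + 1) / qnum q (u + v)) • (1 : A)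
              + Hprod q a i (r + 1) (u + v) * a (i + (r + 1)))
          - (qnum q v / (qnum q u * qnum q (u + v))) • (Hprod q a (i + 1) (r + 1) 1
              - (qnum q (1 + ((r : ℕ) : ℂ) + 1) / qnum q 1) • (1 : A)
              + Hprod q a (i + 1) r 1 * a (i + 1 + r))
          - (Hprod q a i (r + 1) u - Hprod q a i (r + 1) (u + v)
              - (qnum q v / (qnum q u * qnum q (u + v))) • Hprod q a (i + 1) r 1)
              * a (i + (r + 1))
          + (qnum q (u + ((r : ℂ) + 1) + 1) / qnum q u
              - qnum q (u + v + ((r : ℂ) + 1) + 1) / qnum q (u + v)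
              - (qnum q v / (qnum q u * qnum q (u + v)))
                  * (qnum q (1 + (r : ℂ) + 1) / qnum q 1)) • (1 : A) := by
      rw [hia]
      push_cast
      simp only [sub_mul, smul_mul_assoc, smul_sub, smul_add, smul_smul]
      module
    rw [hkey, hsc, zero_smul, add_zero]
    refine Submodule.sub_mem _ (Submodule.sub_mem _ (Submodule.sub_mem _ ?_ ?_) ?_) ?_
    · exact e1
    · exact e2
    · exact Submodule.smul_mem _ _ (S_le a (Nat.le_succ i) (by omega) e3)
    · exact S_le a le_rfl (by omega) hD

end HAux

/-- Modulo the span `A_{i,i+r-1}` of elements `X·a_k` with `i ≤ k ≤ i+r-1`, one has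
`H_{i,i+r}(u) ≡ H_{i,i+r}(u+v) + ([v]/([u][u+v])) H_{i+1,i+r}(1)` for all `r ≥ 0`. -/
theorem Hprod_shift_mod (A : Type*) [Ring A] [Algebra ℂ A]
    (q : ℂ) (hq : q ≠ 0) (hqq : q - q⁻¹ ≠ 0) (a : ℕ → A)
    (hsq : ∀ i, a i * a i = qnum q 2 • a i)
    (hcomm : ∀ i j, i + 1 < j → a i * a j = a j * a i)
    (hbraid : ∀ i, a i * a (i + 1) * a i - a i = a (i + 1) * a i * a (i + 1) - a (i + 1))
    (i r : ℕ) (u v : ℂ)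
    (hgen : ∀ k : ℕ, k ≤ r →
      qnum q (u + (k : ℂ)) ≠ 0 ∧ qnum q (u + v + (k : ℂ)) ≠ 0 ∧
      qnum q ((k : ℂ) + 1) ≠ 0) :
    Hprod q a i (r + 1) u
        - Hprod q a i (r + 1) (u + v)
        - (qnum q v / (qnum q u * qnum q (u + v))) • Hprod q a (i + 1) r 1
      ∈ Submodule.span ℂ {y : A | ∃ X : A, ∃ k : ℕ, i ≤ k ∧ k + 1 ≤ i + r ∧ y = X * a k} :=
  HAux.main q hq hqq a hcomm i u v r hgen
end
end

section
/- The operators π_i(u) := u⁻¹·1 - π_i in the group algebra of the symmetric group S_N (where π_i are the adjacent transpositions) satisfy the Baxterised Yang-Baxter equation π_i(u)·π_{i+1}(u+v)·π_i(v) = π_{i+1}(v)·π_i(u+v)·π_{i+1}(u) for all nonzero u, v with u + v ≠ 0. -/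
noncomputable section

/-- The Baxterised elements `π_i(u) = u⁻¹·1 - π_i` of the group algebra `ℂ[S_N]`,
where `π_i` are the adjacent transpositions, satisfy the Yang-Baxter equation
`π_i(u) π_{i+1}(u+v) π_i(v) = π_{i+1}(v) π_i(u+v) π_{i+1}(u)`. -/
theorem symmetric_group_baxterised_yang_baxter
    (N i : ℕ) (hi : i + 2 < N) (u v : ℂ)
    (hu : u ≠ 0) (hv : v ≠ 0) (huv : u + v ≠ 0) :
    letI A := MonoidAlgebra ℂ (Equiv.Perm (Fin N))
    letI p1 : A := MonoidAlgebra.of ℂ (Equiv.Perm (Fin N))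
      (Equiv.swap ⟨i, by omega⟩ ⟨i + 1, by omega⟩)
    letI p2 : A := MonoidAlgebra.of ℂ (Equiv.Perm (Fin N))
      (Equiv.swap ⟨i + 1, by omega⟩ ⟨i + 2, by omega⟩)
    (u⁻¹ • (1 : A) - p1) * ((u + v)⁻¹ • (1 : A) - p2) * (v⁻¹ • (1 : A) - p1)
      = (v⁻¹ • (1 : A) - p2) * ((u + v)⁻¹ • (1 : A) - p1) * (u⁻¹ • (1 : A) - p2) := by
  set A := MonoidAlgebra ℂ (Equiv.Perm (Fin N))
  set x : Fin N := ⟨i, by omega⟩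
  set y : Fin N := ⟨i + 1, by omega⟩
  set z : Fin N := ⟨i + 2, by omega⟩
  have hxy : x ≠ y := by simp [x, y, Fin.ext_iff]
  have hyz : y ≠ z := by simp [y, z, Fin.ext_iff]
  have hxz : x ≠ z := by simp [x, z, Fin.ext_iff]
  set p1 : A := MonoidAlgebra.of ℂ (Equiv.Perm (Fin N)) (Equiv.swap x y) with hd1
  set p2 : A := MonoidAlgebra.of ℂ (Equiv.Perm (Fin N)) (Equiv.swap y z) with hd2
  have hp1 : p1 * p1 = 1 := by
    rw [hd1, ← map_mul, Equiv.swap_mul_self, map_one]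
  have hp2 : p2 * p2 = 1 := by
    rw [hd2, ← map_mul, Equiv.swap_mul_self, map_one]
  have hbr : p1 * p2 * p1 = p2 * p1 * p2 := by
    rw [hd1, hd2, ← map_mul, ← map_mul, ← map_mul, ← map_mul]
    congr 1
    have h1 := Equiv.swap_mul_swap_mul_swap hxy hxz
    have h2 := Equiv.swap_mul_swap_mul_swap hyz.symm hxz.symm
    rw [Equiv.swap_comm y x, Equiv.swap_comm z y] at h2
    rw [h2, h1, Equiv.swap_comm x z]
  have key : u⁻¹ * v⁻¹ = (u + v)⁻¹ * u⁻¹ + (u + v)⁻¹ * v⁻¹ := by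
    field_simp
    ring
  show (u⁻¹ • (1 : A) - p1) * ((u + v)⁻¹ • (1 : A) - p2) * (v⁻¹ • (1 : A) - p1)
      = (v⁻¹ • (1 : A) - p2) * ((u + v)⁻¹ • (1 : A) - p1) * (u⁻¹ • (1 : A) - p2)
  simp only [mul_sub, sub_mul, smul_mul_assoc, mul_smul_comm, smul_smul, one_mul, mul_one]
  rw [hp1, hp2, hbr]
  match_scalars <;> first
    | linear_combination key
    | linear_combination -key
    | ring
end
end
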